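/- Let n ≥ 1, let Ω ⊆ ℝⁿ be a bounded open set, let e : ℝⁿ → ℝⁿ be continuously differentiable with operator norm ‖De(p)‖ ≤ 1/2 for all p ∈ Ω, and let g, h : Ω → ℝⁿ be measurable with ‖g‖·‖h‖ Lebesgue integrable on Ω. For θ ∈ [0,1] and p ∈ Ω set J_θ(p) = Iₙ + θ De(p), E_θ(p) = De(p) J_θ(p)⁻¹, and D_θ(p) = tr(E_θ(p)) Iₙ − E_θ(p) − E_θ(p)ᵀ. Then ∫_Ω ( J₁(p)⁻ᵀ g(p) ) · ( J₁(p)⁻ᵀ h(p) ) det J₁(p) dp − ∫_Ω g(p)·h(p) dp = ∫₀¹ ( ∫_Ω ( J_θ(p)⁻ᵀ g(p) ) · ( D_θ(p) ( J_θ(p)⁻ᵀ h(p) ) ) det J_θ(p) dp ) dθ, where · denotes the Euclidean inner product on ℝⁿ and J⁻ᵀ the inverse transpose. -/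

import Mathlib

open MeasureTheory

noncomputable section

/-- J_θ(p) = Iₙ + θ De(p). -/
def Jmap {n : ℕ} (e : EuclideanSpace ℝ (Fin n) → EuclideanSpace ℝ (Fin n)) (θ : ℝ)
    (p : EuclideanSpace ℝ (Fin n)) :
    EuclideanSpace ℝ (Fin n) →L[ℝ] EuclideanSpace ℝ (Fin n) :=
  1 + θ • fderiv ℝ e p

/-- E_θ(p) = De(p) J_θ(p)⁻¹. -/
def Emap {n : ℕ} (e : EuclideanSpace ℝ (Fin n) → EuclideanSpace ℝ (Fin n)) (θ : ℝ)
    (p : EuclideanSpace ℝ (Fin n)) :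
    EuclideanSpace ℝ (Fin n) →L[ℝ] EuclideanSpace ℝ (Fin n) :=
  (fderiv ℝ e p).comp (Ring.inverse (Jmap e θ p))

/-- D_θ(p) = tr(E_θ(p)) Iₙ − E_θ(p) − E_θ(p)ᵀ. -/
def Dmap {n : ℕ} (e : EuclideanSpace ℝ (Fin n) → EuclideanSpace ℝ (Fin n)) (θ : ℝ)
    (p : EuclideanSpace ℝ (Fin n)) :
    EuclideanSpace ℝ (Fin n) →L[ℝ] EuclideanSpace ℝ (Fin n) :=
  (LinearMap.trace ℝ (EuclideanSpace ℝ (Fin n)) (Emap e θ p).toLinearMap) • 1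
    - Emap e θ p - ContinuousLinearMap.adjoint (Emap e θ p)

/-- J_θ(p)⁻ᵀ, the inverse transpose of J_θ(p). -/
def JinvT {n : ℕ} (e : EuclideanSpace ℝ (Fin n) → EuclideanSpace ℝ (Fin n)) (θ : ℝ)
    (p : EuclideanSpace ℝ (Fin n)) :
    EuclideanSpace ℝ (Fin n) →L[ℝ] EuclideanSpace ℝ (Fin n) :=
  ContinuousLinearMap.adjoint (Ring.inverse (Jmap e θ p))

end

/- ======================  auxiliary material  ====================== -/

open ContinuousLinearMap

set_option synthInstance.maxHeartbeats 2000000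
set_option maxHeartbeats 8000000

noncomputable section Aux

variable {n : ℕ}

local notation "En" => EuclideanSpace ℝ (Fin n)
local notation "CLM" => EuclideanSpace ℝ (Fin n) →L[ℝ] EuclideanSpace ℝ (Fin n)

lemma hasDerivAt_det_one_add_smul (C : CLM) :
    HasDerivAt (fun s : ℝ => (1 + s • C : CLM).det)
      (LinearMap.trace ℝ En C.toLinearMap) 0 := by
  classical
  let b := (stdOrthonormalBasis ℝ En).toBasis
  let M := LinearMap.toMatrix b b C.toLinearMap
  have key : ∀ s : ℝ, (1 + s • C : CLM).det = Matrix.det (1 + s • M) := by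
    intro s
    rw [ContinuousLinearMap.det, ← LinearMap.det_toMatrix b]
    congr 1
    have : ((1 + s • C : CLM) : En →ₗ[ℝ] En) = 1 + s • (C : En →ₗ[ℝ] En) := by
      ext x; simp
    rw [this, map_add, _root_.map_smul, LinearMap.toMatrix_one]
  have tr_eq : M.trace = LinearMap.trace ℝ En C.toLinearMap :=
    (LinearMap.trace_eq_matrix_trace ℝ b C.toLinearMap).symm
  have h2 : ∀ s : ℝ, Matrix.det (1 + s • M)
      = 1 + M.trace * s
        + (Matrix.det (1 + (Polynomial.X : Polynomial ℝ) • M.map Polynomial.C)).divX.divX.eval s * s ^ 2 :=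
    fun s => Matrix.det_one_add_smul s M
  set q := (Matrix.det (1 + (Polynomial.X : Polynomial ℝ) • M.map Polynomial.C)).divX.divX with hq
  have ha : HasDerivAt (fun s : ℝ => 1 + M.trace * s) M.trace 0 := by
    simpa using ((hasDerivAt_id (0:ℝ)).const_mul M.trace).const_add (1:ℝ)
  have hb : HasDerivAt (fun s : ℝ => q.eval s * s ^ 2) 0 0 := by
    have := (q.hasDerivAt (0:ℝ)).mul (hasDerivAt_pow 2 (0:ℝ))
    simpa [Pi.mul_def] using this
  have h3 : HasDerivAt (fun s : ℝ => 1 + M.trace * s + q.eval s * s ^ 2) M.trace 0 := by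
    simpa [Pi.add_def] using ha.add hb
  rw [← tr_eq]
  have : (fun s : ℝ => (1 + s • C : CLM).det)
      = fun s : ℝ => 1 + M.trace * s + q.eval s * s ^ 2 := by
    funext s; rw [key s, h2 s]
  rw [this]
  exact h3

lemma det_mul' (S T : CLM) : (S * T).det = S.det * T.det := by
  simp [ContinuousLinearMap.det, ContinuousLinearMap.mul_def, ContinuousLinearMap.coe_comp,
    LinearMap.det_comp]

lemma hasDerivAt_det_path (A : CLM) (θ₀ : ℝ) (u : (En →L[ℝ] En)ˣ)
    (hu : (u : CLM) = 1 + θ₀ • A) :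
    HasDerivAt (fun θ : ℝ => (1 + θ • A : CLM).det)
      ((u : CLM).det * LinearMap.trace ℝ En ((↑u⁻¹ * A : CLM)).toLinearMap) θ₀ := by
  haveI hsc : SMulCommClass ℝ (EuclideanSpace ℝ (Fin n) →L[ℝ] EuclideanSpace ℝ (Fin n))
      (EuclideanSpace ℝ (Fin n) →L[ℝ] EuclideanSpace ℝ (Fin n)) := ⟨fun a b c => by ext x; simp⟩
  have key : ∀ θ : ℝ, (1 + θ • A : CLM) = ↑u * (1 + (θ - θ₀) • (↑u⁻¹ * A : CLM)) := by
    intro θ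
    have hmsc : (↑u : CLM) * ((θ - θ₀) • (↑u⁻¹ * A : CLM)) = (θ - θ₀) • ((↑u : CLM) * ((↑u⁻¹ : CLM) * A)) :=
      mul_smul_comm _ _ _
    rw [mul_add, mul_one, hmsc, ← mul_assoc, u.mul_inv, one_mul, hu]
    have hss := sub_smul θ θ₀ A
    rw [hss]; abel
  have h1 : HasDerivAt (fun θ : ℝ => (1 + (θ - θ₀) • (↑u⁻¹ * A : CLM) : CLM).det)
      (LinearMap.trace ℝ En ((↑u⁻¹ * A : CLM)).toLinearMap) θ₀ := by
    have hin : HasDerivAt (fun θ : ℝ => θ - θ₀) 1 θ₀ := (hasDerivAt_id θ₀).sub_const θ₀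
    have hg : HasDerivAt (fun s : ℝ => (1 + s • (↑u⁻¹ * A : CLM) : CLM).det)
        (LinearMap.trace ℝ En ((↑u⁻¹ * A : CLM)).toLinearMap) (θ₀ - θ₀) := by
      rw [sub_self]; exact hasDerivAt_det_one_add_smul _
    have := HasDerivAt.comp (h := fun θ => θ - θ₀) θ₀ hg hin
    simpa [Function.comp_def] using this
  have h2 := h1.const_mul (u : CLM).det
  have : (fun θ : ℝ => (1 + θ • A : CLM).det)
      = fun θ : ℝ => (u : CLM).det * (1 + (θ - θ₀) • (↑u⁻¹ * A : CLM) : CLM).det := by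
    funext θ; rw [key θ, det_mul']
  rw [this]
  exact h2

/-- The adjoint as a continuous linear map on the space of operators. -/
def adjL {n : ℕ} : (EuclideanSpace ℝ (Fin n) →L[ℝ] EuclideanSpace ℝ (Fin n)) →L[ℝ]
    (EuclideanSpace ℝ (Fin n) →L[ℝ] EuclideanSpace ℝ (Fin n)) :=
  LinearMap.toContinuousLinearMap
    { toFun := fun T => ContinuousLinearMap.adjoint T
      map_add' := fun x y => by simp [map_add]
      map_smul' := fun c x => by
        simp [LinearIsometryEquiv.map_smulₛₗ, starRingEnd_apply, star_trivial] }

@[simp] lemma adjL_apply (T : CLM) : adjL T = ContinuousLinearMap.adjoint T := rfl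

def traceCLM {n : ℕ} : (EuclideanSpace ℝ (Fin n) →L[ℝ] EuclideanSpace ℝ (Fin n)) →L[ℝ] ℝ :=
  LinearMap.toContinuousLinearMap
    ((LinearMap.trace ℝ (EuclideanSpace ℝ (Fin n))).comp (ContinuousLinearMap.coeLM ℝ))

@[simp] lemma traceCLM_apply (T : CLM) :
    traceCLM T = LinearMap.trace ℝ (EuclideanSpace ℝ (Fin n)) T.toLinearMap := rfl

def Jy {n : ℕ} (y : (EuclideanSpace ℝ (Fin n) →L[ℝ] EuclideanSpace ℝ (Fin n)) × ℝ) :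
    EuclideanSpace ℝ (Fin n) →L[ℝ] EuclideanSpace ℝ (Fin n) := 1 + y.2 • y.1

def Wy {n : ℕ} (y : (EuclideanSpace ℝ (Fin n) →L[ℝ] EuclideanSpace ℝ (Fin n)) × ℝ) :
    EuclideanSpace ℝ (Fin n) →L[ℝ] EuclideanSpace ℝ (Fin n) := adjL (Ring.inverse (Jy y))

def Ey {n : ℕ} (y : (EuclideanSpace ℝ (Fin n) →L[ℝ] EuclideanSpace ℝ (Fin n)) × ℝ) :
    EuclideanSpace ℝ (Fin n) →L[ℝ] EuclideanSpace ℝ (Fin n) := y.1 * Ring.inverse (Jy y)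

def Dy {n : ℕ} (y : (EuclideanSpace ℝ (Fin n) →L[ℝ] EuclideanSpace ℝ (Fin n)) × ℝ) :
    EuclideanSpace ℝ (Fin n) →L[ℝ] EuclideanSpace ℝ (Fin n) :=
  (traceCLM (Ey y)) • 1 - Ey y - adjL (Ey y)

def dy {n : ℕ} (y : (EuclideanSpace ℝ (Fin n) →L[ℝ] EuclideanSpace ℝ (Fin n)) × ℝ) : ℝ :=
  (Jy y).det

def Oset (n : ℕ) : Set ((EuclideanSpace ℝ (Fin n) →L[ℝ] EuclideanSpace ℝ (Fin n)) × ℝ) :=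
  {y | ‖y.2 • y.1‖ < 1}

lemma JinvT_eq (e : En → En) (θ : ℝ) (p : En) : JinvT e θ p = Wy (fderiv ℝ e p, θ) := rfl
lemma Jmap_eq (e : En → En) (θ : ℝ) (p : En) : Jmap e θ p = Jy (fderiv ℝ e p, θ) := rfl
lemma Emap_eq (e : En → En) (θ : ℝ) (p : En) : Emap e θ p = Ey (fderiv ℝ e p, θ) := rfl
lemma Dmap_eq (e : En → En) (θ : ℝ) (p : En) : Dmap e θ p = Dy (fderiv ℝ e p, θ) := rfl

lemma isOpen_Oset : IsOpen (Oset n) := by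
  have : Continuous fun y : CLM × ℝ => ‖y.2 • y.1‖ := (continuous_snd.smul continuous_fst).norm
  simpa [Oset] using isOpen_lt this continuous_const

lemma mem_Oset_unit {y : CLM × ℝ} (hy : y ∈ Oset n) : IsUnit (Jy y) := by
  refine ⟨Units.oneSub (-(y.2 • y.1)) (by simpa [Oset] using hy), ?_⟩
  rw [Units.val_oneSub, sub_neg_eq_add]; rfl

lemma continuous_Jy : Continuous (Jy (n := n)) := by
  have : Continuous fun y : CLM × ℝ => y.2 • y.1 := continuous_snd.smul continuous_fst
  exact continuous_const.add this

lemma continuousOn_rinv : ContinuousOn (fun y : CLM × ℝ => Ring.inverse (Jy y)) (Oset n) := by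
  intro y hy
  obtain ⟨u, hu⟩ := mem_Oset_unit hy
  have h1 : ContinuousAt Ring.inverse (Jy y) := by
    rw [← hu]; exact NormedRing.inverse_continuousAt u
  exact (h1.comp (continuous_Jy.continuousAt)).continuousWithinAt

lemma continuousOn_Wy : ContinuousOn (Wy (n := n)) (Oset n) :=
  adjL.continuous.comp_continuousOn continuousOn_rinv

lemma continuousOn_Ey : ContinuousOn (Ey (n := n)) (Oset n) :=
  (continuous_fst.continuousOn).mul continuousOn_rinv

lemma continuousOn_Dy : ContinuousOn (Dy (n := n)) (Oset n) := by
  refine ContinuousOn.sub (ContinuousOn.sub ?_ continuousOn_Ey)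
    (adjL.continuous.comp_continuousOn continuousOn_Ey)
  exact (traceCLM.continuous.comp_continuousOn continuousOn_Ey).smul continuousOn_const

lemma continuous_dy : Continuous (dy (n := n)) :=
  ContinuousLinearMap.continuous_det.comp continuous_Jy

lemma exists_bound :
    ∃ C : ℝ, ∀ y : CLM × ℝ, ‖y.1‖ ≤ 1 / 2 → y.2 ∈ Set.Icc (0:ℝ) 1 →
      ‖Wy y‖ ^ 2 * (1 + ‖Dy y‖) * |dy y| ≤ C := by
  classical
  set K : Set (CLM × ℝ) := Metric.closedBall (0 : CLM) (1/2) ×ˢ Set.Icc (0:ℝ) 1 with hK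
  have hKc : IsCompact K := (ProperSpace.isCompact_closedBall _ _).prod isCompact_Icc
  have hKO : K ⊆ Oset n := by
    rintro ⟨A, θ⟩ ⟨hA, hθ⟩
    simp only [Metric.mem_closedBall, dist_zero_right] at hA
    have : ‖θ • A‖ ≤ ‖A‖ := by
      have hns : ‖θ • A‖ = ‖θ‖ * ‖A‖ := norm_smul θ A
      rw [hns]
      calc ‖θ‖ * ‖A‖ ≤ 1 * ‖A‖ := by
            apply mul_le_mul_of_nonneg_right _ (norm_nonneg _)
            rw [Real.norm_eq_abs, abs_le]; exact ⟨by linarith [hθ.1], hθ.2⟩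
        _ = ‖A‖ := one_mul _
    exact lt_of_le_of_lt (this.trans hA) (by norm_num)
  have hcont : ContinuousOn (fun y : CLM × ℝ => ‖Wy y‖ ^ 2 * (1 + ‖Dy y‖) * |dy y|) K := by
    refine ContinuousOn.mul (ContinuousOn.mul ?_ ?_) ?_
    · exact ((continuousOn_Wy.mono hKO).norm.pow 2)
    · exact continuousOn_const.add (continuousOn_Dy.mono hKO).norm
    · exact (continuous_dy.abs).continuousOn
  obtain ⟨C, hC⟩ := hKc.exists_bound_of_continuousOn hcont
  refine ⟨C, fun y h1 h2 => ?_⟩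
  have hyK : y ∈ K := ⟨by simpa [Metric.mem_closedBall, dist_zero_right] using h1, h2⟩
  calc ‖Wy y‖ ^ 2 * (1 + ‖Dy y‖) * |dy y|
      ≤ ‖‖Wy y‖ ^ 2 * (1 + ‖Dy y‖) * |dy y|‖ := le_abs_self _
    _ ≤ C := hC y hyK

lemma abs_F_le {C : ℝ} {y : CLM × ℝ} (hC : ‖Wy y‖ ^ 2 * (1 + ‖Dy y‖) * |dy y| ≤ C)
    (gv hv : En) :
    |(inner ℝ (Wy y gv) (Wy y hv) : ℝ) * dy y| ≤ C * (‖gv‖ * ‖hv‖) := by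
  have h1 : |(inner ℝ (Wy y gv) (Wy y hv) : ℝ)| ≤ ‖Wy y gv‖ * ‖Wy y hv‖ := abs_real_inner_le_norm _ _
  have h2 : ‖Wy y gv‖ ≤ ‖Wy y‖ * ‖gv‖ := (Wy y).le_opNorm gv
  have h3 : ‖Wy y hv‖ ≤ ‖Wy y‖ * ‖hv‖ := (Wy y).le_opNorm hv
  have hd : (0:ℝ) ≤ |dy y| := abs_nonneg _
  have hD : (0:ℝ) ≤ ‖Dy y‖ := norm_nonneg _
  have hstep : |(inner ℝ (Wy y gv) (Wy y hv) : ℝ) * dy y|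
      ≤ (‖Wy y‖ * ‖gv‖) * (‖Wy y‖ * ‖hv‖) * |dy y| := by
    rw [abs_mul]
    have : |(inner ℝ (Wy y gv) (Wy y hv) : ℝ)| ≤ (‖Wy y‖ * ‖gv‖) * (‖Wy y‖ * ‖hv‖) :=
      h1.trans (mul_le_mul h2 h3 (norm_nonneg _) (by positivity))
    exact mul_le_mul_of_nonneg_right this hd
  refine hstep.trans ?_
  have hre : (‖Wy y‖ * ‖gv‖) * (‖Wy y‖ * ‖hv‖) * |dy y|
      = (‖Wy y‖ ^ 2 * |dy y|) * (‖gv‖ * ‖hv‖) := by ring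
  rw [hre]
  have hGN : ‖Wy y‖ ^ 2 * |dy y| ≤ ‖Wy y‖ ^ 2 * (1 + ‖Dy y‖) * |dy y| := by
    nlinarith [mul_nonneg (mul_nonneg (sq_nonneg ‖Wy y‖) hD) hd]
  exact mul_le_mul_of_nonneg_right (hGN.trans hC) (by positivity)

lemma abs_G_le {C : ℝ} {y : CLM × ℝ} (hC : ‖Wy y‖ ^ 2 * (1 + ‖Dy y‖) * |dy y| ≤ C)
    (gv hv : En) :
    |(inner ℝ (Wy y gv) (Dy y (Wy y hv)) : ℝ) * dy y| ≤ C * (‖gv‖ * ‖hv‖) := by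
  have h1 : |(inner ℝ (Wy y gv) (Dy y (Wy y hv)) : ℝ)| ≤ ‖Wy y gv‖ * ‖Dy y (Wy y hv)‖ :=
    abs_real_inner_le_norm _ _
  have h2 : ‖Wy y gv‖ ≤ ‖Wy y‖ * ‖gv‖ := (Wy y).le_opNorm gv
  have h3 : ‖Dy y (Wy y hv)‖ ≤ ‖Dy y‖ * (‖Wy y‖ * ‖hv‖) := by
    refine ((Dy y).le_opNorm _).trans ?_
    exact mul_le_mul_of_nonneg_left ((Wy y).le_opNorm hv) (norm_nonneg _)
  have hd : (0:ℝ) ≤ |dy y| := abs_nonneg _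
  have hstep : |(inner ℝ (Wy y gv) (Dy y (Wy y hv)) : ℝ) * dy y|
      ≤ (‖Wy y‖ * ‖gv‖) * (‖Dy y‖ * (‖Wy y‖ * ‖hv‖)) * |dy y| := by
    rw [abs_mul]
    have : |(inner ℝ (Wy y gv) (Dy y (Wy y hv)) : ℝ)|
        ≤ (‖Wy y‖ * ‖gv‖) * (‖Dy y‖ * (‖Wy y‖ * ‖hv‖)) :=
      h1.trans (mul_le_mul h2 h3 (norm_nonneg _) (by positivity))
    exact mul_le_mul_of_nonneg_right this hd
  refine hstep.trans ?_
  have hre : (‖Wy y‖ * ‖gv‖) * (‖Dy y‖ * (‖Wy y‖ * ‖hv‖)) * |dy y|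
      = (‖Wy y‖ ^ 2 * ‖Dy y‖ * |dy y|) * (‖gv‖ * ‖hv‖) := by ring
  rw [hre]
  have hGN : ‖Wy y‖ ^ 2 * ‖Dy y‖ * |dy y| ≤ ‖Wy y‖ ^ 2 * (1 + ‖Dy y‖) * |dy y| := by
    nlinarith [sq_nonneg ‖Wy y‖, norm_nonneg (Dy y), abs_nonneg (dy y)]
  exact mul_le_mul_of_nonneg_right (hGN.trans hC) (by positivity)

lemma Jy_zero (A : CLM) : Jy (A, (0:ℝ)) = 1 := by
  have h0 : (0:ℝ) • A = 0 := zero_smul ℝ A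
  simp [Jy, h0]

lemma Wy_zero (A : CLM) : Wy (A, (0:ℝ)) = 1 := by
  have : Jy (A, (0:ℝ)) = 1 := Jy_zero A
  rw [Wy, this, Ring.inverse_one, adjL_apply]
  rw [ContinuousLinearMap.one_def, ContinuousLinearMap.adjoint_id]

lemma dy_zero (A : CLM) : dy (A, (0:ℝ)) = 1 := by
  rw [dy, Jy_zero A]
  simp [ContinuousLinearMap.det, ContinuousLinearMap.one_def]

lemma key_deriv (e : En → En) (p : En) (gv hv : En) (θ₀ : ℝ)
    (h1 : ‖θ₀ • fderiv ℝ e p‖ < 1) :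
    HasDerivAt (fun θ : ℝ =>
        (inner ℝ (JinvT e θ p gv) (JinvT e θ p hv) : ℝ) * (Jmap e θ p).det)
      ((inner ℝ (JinvT e θ₀ p gv) (Dmap e θ₀ p (JinvT e θ₀ p hv)) : ℝ) * (Jmap e θ₀ p).det) θ₀ := by
  set A : CLM := fderiv ℝ e p with hA
  set u : (En →L[ℝ] En)ˣ := Units.oneSub (-(θ₀ • A)) (by simpa using h1) with hu_def
  have huv : (u : CLM) = 1 + θ₀ • A := by
    rw [hu_def, Units.val_oneSub, sub_neg_eq_add]
  have hJu : Jmap e θ₀ p = (u : CLM) := by rw [Jmap, huv]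
  have hRinv : Ring.inverse (Jmap e θ₀ p) = ((u⁻¹ : (En →L[ℝ] En)ˣ) : CLM) := by
    rw [hJu, Ring.inverse_unit]
  have hJ : HasDerivAt (fun θ : ℝ => Jmap e θ p) A θ₀ := by
    have : HasDerivAt (fun θ : ℝ => (1 : CLM) + θ • A) ((1:ℝ) • A) θ₀ :=
      ((hasDerivAt_id θ₀).smul_const A).const_add (1 : CLM)
    simpa [Jmap] using this
  have hInv : HasDerivAt (fun θ : ℝ => Ring.inverse (Jmap e θ p))
      (-(((u⁻¹ : (En →L[ℝ] En)ˣ) : CLM) * A * ((u⁻¹ : (En →L[ℝ] En)ˣ) : CLM))) θ₀ := by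
    have hfd := hasFDerivAt_ringInverse (𝕜 := ℝ) u
    rw [← hJu] at hfd
    have := hfd.comp_hasDerivAt θ₀ hJ
    simpa [Function.comp_def] using this
  have hW : ∀ v : En, HasDerivAt (fun θ : ℝ => JinvT e θ p v)
      (-(ContinuousLinearMap.adjoint
          (((u⁻¹ : (En →L[ℝ] En)ˣ) : CLM) * A * ((u⁻¹ : (En →L[ℝ] En)ˣ) : CLM)) v)) θ₀ := by
    intro v
    have hAdj : HasDerivAt (fun θ : ℝ => adjL (Ring.inverse (Jmap e θ p)))
        (adjL (-(((u⁻¹ : (En →L[ℝ] En)ˣ) : CLM) * A * ((u⁻¹ : (En →L[ℝ] En)ˣ) : CLM)))) θ₀ :=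
      (adjL.hasFDerivAt.comp_hasDerivAt θ₀ hInv)
    have := hAdj.clm_apply (hasDerivAt_const θ₀ v)
    simpa [JinvT, map_neg] using this
  have hdet : HasDerivAt (fun θ : ℝ => (Jmap e θ p).det)
      ((u : CLM).det * LinearMap.trace ℝ En ((↑u⁻¹ * A : CLM)).toLinearMap) θ₀ := by
    simpa [Jmap] using hasDerivAt_det_path A θ₀ u huv
  have hinner := (HasDerivAt.inner ℝ (hW gv) (hW hv))
  have hfull := hinner.mul hdet
  refine hfull.congr_deriv ?_; symm
  have hWu : JinvT e θ₀ p = ContinuousLinearMap.adjoint ((↑u⁻¹ : CLM)) := by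
    rw [JinvT, hRinv]
  have hEu : Emap e θ₀ p = (A * (↑u⁻¹ : CLM) : CLM) := by
    rw [Emap, hRinv]; rfl
  have hadj3 : ContinuousLinearMap.adjoint ((↑u⁻¹ * A * ↑u⁻¹ : CLM))
      = (ContinuousLinearMap.adjoint (A * (↑u⁻¹ : CLM) : CLM)).comp
          (ContinuousLinearMap.adjoint ((↑u⁻¹ : CLM))) := by
    rw [mul_assoc, ContinuousLinearMap.mul_def, ContinuousLinearMap.adjoint_comp]
  have htr : LinearMap.trace ℝ En ((↑u⁻¹ * A : CLM)).toLinearMap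
      = LinearMap.trace ℝ En ((A * (↑u⁻¹ : CLM) : CLM)).toLinearMap := by
    have e1 : ((↑u⁻¹ * A : CLM) : En →ₗ[ℝ] En)
        = ((↑u⁻¹ : CLM) : En →ₗ[ℝ] En) * ((A : CLM) : En →ₗ[ℝ] En) := rfl
    have e2 : ((A * (↑u⁻¹ : CLM) : CLM) : En →ₗ[ℝ] En)
        = ((A : CLM) : En →ₗ[ℝ] En) * ((↑u⁻¹ : CLM) : En →ₗ[ℝ] En) := rfl
    rw [e1, e2, LinearMap.trace_mul_comm]
  rw [hJu, hWu, Dmap, hEu, hadj3, htr]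
  set EE : CLM := A * (↑u⁻¹ : CLM) with hEE
  set W : CLM := ContinuousLinearMap.adjoint ((↑u⁻¹ : CLM)) with hW2
  set d : ℝ := (↑u : CLM).det with hd
  set τ : ℝ := LinearMap.trace ℝ En (EE : En →ₗ[ℝ] En) with hτ
  have hexp : ((τ • (1:CLM) - EE - ContinuousLinearMap.adjoint EE) (W hv))
      = τ • (W hv) - EE (W hv) - ContinuousLinearMap.adjoint EE (W hv) := by
    simp
  rw [hexp]
  have hl1 : (inner ℝ (W gv) (τ • (W hv) - EE (W hv) - ContinuousLinearMap.adjoint EE (W hv)) : ℝ)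
      = τ * (inner ℝ (W gv) (W hv) : ℝ) - (inner ℝ (W gv) (EE (W hv)) : ℝ)
        - (inner ℝ (W gv) (ContinuousLinearMap.adjoint EE (W hv)) : ℝ) := by
    rw [inner_sub_right, inner_sub_right, real_inner_smul_right]
  have hr1 : (inner ℝ ((ContinuousLinearMap.adjoint EE).comp W gv) (W hv) : ℝ)
      = (inner ℝ (W gv) (EE (W hv)) : ℝ) := by
    rw [ContinuousLinearMap.comp_apply]
    exact ContinuousLinearMap.adjoint_inner_left EE (W hv) (W gv)
  rw [hl1]
  simp only [ContinuousLinearMap.neg_apply, ContinuousLinearMap.comp_apply, inner_neg_left,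
    inner_neg_right]
  have hr2 : (inner ℝ ((ContinuousLinearMap.adjoint EE) (W gv)) (W hv) : ℝ)
      = (inner ℝ (W gv) (EE (W hv)) : ℝ) :=
    ContinuousLinearMap.adjoint_inner_left EE (W hv) (W gv)
  rw [hr2]
  ring

end Aux

/-- Pullback form of the stiffness-matrix difference identity (Lemma 5.1, second identity):
∫_Ω (J₁⁻ᵀg)·(J₁⁻ᵀh) det J₁ − ∫_Ω g·h = ∫₀¹ ∫_Ω (J_θ⁻ᵀg)·(D_θ (J_θ⁻ᵀh)) det J_θ dp dθ. -/
theorem stmt14 (n : ℕ) (hn : 1 ≤ n)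
    (Ω : Set (EuclideanSpace ℝ (Fin n))) (hΩo : IsOpen Ω) (hΩb : Bornology.IsBounded Ω)
    (e : EuclideanSpace ℝ (Fin n) → EuclideanSpace ℝ (Fin n)) (he : ContDiff ℝ 1 e)
    (hbound : ∀ p ∈ Ω, ‖fderiv ℝ e p‖ ≤ 1 / 2)
    (g h : EuclideanSpace ℝ (Fin n) → EuclideanSpace ℝ (Fin n))
    (hg : Measurable g) (hh : Measurable h)
    (hint : IntegrableOn (fun p => ‖g p‖ * ‖h p‖) Ω) :
    (∫ p in Ω, (inner ℝ (JinvT e 1 p (g p)) (JinvT e 1 p (h p)) : ℝ) * (Jmap e 1 p).det)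
        - ∫ p in Ω, (inner ℝ (g p) (h p) : ℝ)
      = ∫ θ in (0:ℝ)..1, ∫ p in Ω,
          (inner ℝ (JinvT e θ p (g p)) (Dmap e θ p (JinvT e θ p (h p))) : ℝ)
            * (Jmap e θ p).det := by
  classical
  have hΩm : MeasurableSet Ω := hΩo.measurableSet
  set A : EuclideanSpace ℝ (Fin n) → (EuclideanSpace ℝ (Fin n) →L[ℝ] EuclideanSpace ℝ (Fin n)) :=
    fun p => fderiv ℝ e p with hAdef
  have hAc : Continuous A := he.continuous_fderiv one_ne_zero
  -- membership in the good set
  have hmem : ∀ p ∈ Ω, ∀ θ ∈ Set.Icc (0:ℝ) 1, (A p, θ) ∈ Oset n := by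
    intro p hp θ hθ
    have hns : ‖θ • A p‖ = ‖θ‖ * ‖A p‖ := norm_smul θ (A p)
    have h1 : ‖θ‖ ≤ 1 := by rw [Real.norm_eq_abs, abs_le]; exact ⟨by linarith [hθ.1], hθ.2⟩
    have : ‖θ • A p‖ ≤ 1 / 2 := by
      rw [hns]
      calc ‖θ‖ * ‖A p‖ ≤ 1 * (1/2) :=
            mul_le_mul h1 (hbound p hp) (norm_nonneg _) zero_le_one
        _ = 1/2 := one_mul _
    exact lt_of_le_of_lt this (by norm_num)
  have hsmall : ∀ p ∈ Ω, ∀ θ ∈ Set.Icc (0:ℝ) 1, ‖θ • fderiv ℝ e p‖ < 1 := by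
    intro p hp θ hθ; simpa [Oset] using hmem p hp θ hθ
  obtain ⟨C, hC⟩ := exists_bound (n := n)
  -- the two integrand families
  set F : ℝ → EuclideanSpace ℝ (Fin n) → ℝ := fun θ p =>
    (inner ℝ (JinvT e θ p (g p)) (JinvT e θ p (h p)) : ℝ) * (Jmap e θ p).det with hF
  set G : ℝ → EuclideanSpace ℝ (Fin n) → ℝ := fun θ p =>
    (inner ℝ (JinvT e θ p (g p)) (Dmap e θ p (JinvT e θ p (h p))) : ℝ) * (Jmap e θ p).det with hG
  -- rewrite F, G in terms of the Wy/Dy/dy machinery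
  have hFy : ∀ θ p, F θ p = (inner ℝ (Wy (A p, θ) (g p)) (Wy (A p, θ) (h p)) : ℝ) * dy (A p, θ) := by
    intro θ p; rfl
  have hGy : ∀ θ p, G θ p
      = (inner ℝ (Wy (A p, θ) (g p)) (Dy (A p, θ) (Wy (A p, θ) (h p))) : ℝ) * dy (A p, θ) := by
    intro θ p; rfl
  -- pointwise bounds
  have hbF : ∀ p ∈ Ω, ∀ θ ∈ Set.Icc (0:ℝ) 1, |F θ p| ≤ C * (‖g p‖ * ‖h p‖) := by
    intro p hp θ hθ
    rw [hFy]
    exact abs_F_le (hC (A p, θ) (hbound p hp) hθ) (g p) (h p)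
  have hbG : ∀ p ∈ Ω, ∀ θ ∈ Set.Icc (0:ℝ) 1, |G θ p| ≤ C * (‖g p‖ * ‖h p‖) := by
    intro p hp θ hθ
    rw [hGy]
    exact abs_G_le (hC (A p, θ) (hbound p hp) hθ) (g p) (h p)
  -- value at θ = 0
  have hF0 : ∀ p, F 0 p = (inner ℝ (g p) (h p) : ℝ) := by
    intro p
    rw [hFy, Wy_zero, dy_zero]
    simp
  -- a.e. strong measurability of p ↦ F θ p on Ω, for fixed θ ∈ [0,1]
  have hmeasF : ∀ θ ∈ Set.Icc (0:ℝ) 1,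
      AEStronglyMeasurable (fun p => F θ p) (volume.restrict Ω) := by
    intro θ hθ
    have hmaps : ∀ p ∈ Ω, (A p, θ) ∈ Oset n := fun p hp => hmem p hp θ hθ
    have hcm : Continuous fun p : EuclideanSpace ℝ (Fin n) => (A p, θ) :=
      hAc.prodMk continuous_const
    have hWcont : ContinuousOn (fun p => Wy (A p, θ)) Ω :=
      continuousOn_Wy.comp hcm.continuousOn hmaps
    have hWm : AEStronglyMeasurable (fun p => Wy (A p, θ)) (volume.restrict Ω) :=
      hWcont.aestronglyMeasurable hΩm
    have hgm : AEStronglyMeasurable g (volume.restrict Ω) := hg.aestronglyMeasurable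
    have hhm : AEStronglyMeasurable h (volume.restrict Ω) := hh.aestronglyMeasurable
    have happ : ∀ (k : EuclideanSpace ℝ (Fin n) → EuclideanSpace ℝ (Fin n)),
        AEStronglyMeasurable k (volume.restrict Ω) →
        AEStronglyMeasurable (fun p => Wy (A p, θ) (k p)) (volume.restrict Ω) := by
      intro k hk
      exact isBoundedBilinearMap_apply.continuous.comp_aestronglyMeasurable (hWm.prodMk hk)
    have hdm : AEStronglyMeasurable (fun p => dy (A p, θ)) (volume.restrict Ω) :=
      (continuous_dy.comp hcm).aestronglyMeasurable
    have : AEStronglyMeasurable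
        (fun p => (inner ℝ (Wy (A p, θ) (g p)) (Wy (A p, θ) (h p)) : ℝ)) (volume.restrict Ω) :=
      (happ g hgm).inner (happ h hhm)
    have := this.mul hdm
    exact this
  -- integrability of F 1 and F 0 on Ω
  have hIF1 : IntegrableOn (fun p => F 1 p) Ω := by
    refine Integrable.mono' (hint.const_mul C) (hmeasF 1 (by norm_num)) ?_
    rw [ae_restrict_iff' hΩm]
    exact Filter.Eventually.of_forall fun p hp => by
      simpa [Real.norm_eq_abs] using hbF p hp 1 (by norm_num)
  have hIF0 : IntegrableOn (fun p => F 0 p) Ω := by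
    refine Integrable.mono' hint (hmeasF 0 (by norm_num)) ?_
    rw [ae_restrict_iff' hΩm]
    refine Filter.Eventually.of_forall fun p hp => ?_
    rw [hF0, Real.norm_eq_abs]
    exact abs_real_inner_le_norm _ _
  -- fundamental theorem of calculus for each p ∈ Ω
  have hFTC : ∀ p ∈ Ω, (∫ θ in (0:ℝ)..1, G θ p) = F 1 p - F 0 p := by
    intro p hp
    have hmaps : ∀ θ ∈ Set.uIcc (0:ℝ) 1, (A p, θ) ∈ Oset n := by
      intro θ hθ
      rw [Set.uIcc_of_le zero_le_one] at hθ
      exact hmem p hp θ hθ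
    refine intervalIntegral.integral_eq_sub_of_hasDerivAt (f := fun θ => F θ p) (f' := fun θ => G θ p) ?_ ?_
    · intro θ hθ
      rw [Set.uIcc_of_le zero_le_one] at hθ
      exact key_deriv e p (g p) (h p) θ (hsmall p hp θ hθ)
    · apply ContinuousOn.intervalIntegrable
      have hcm : Continuous fun θ : ℝ => (A p, θ) := continuous_const.prodMk continuous_id
      have hWc : ContinuousOn (fun θ : ℝ => Wy (A p, θ)) (Set.uIcc (0:ℝ) 1) :=
        continuousOn_Wy.comp hcm.continuousOn hmaps
      have hDc : ContinuousOn (fun θ : ℝ => Dy (A p, θ)) (Set.uIcc (0:ℝ) 1) :=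
        continuousOn_Dy.comp hcm.continuousOn hmaps
      have happ1 : ContinuousOn (fun θ : ℝ => Wy (A p, θ) (g p)) (Set.uIcc (0:ℝ) 1) :=
        isBoundedBilinearMap_apply.continuous.comp_continuousOn (hWc.prodMk continuousOn_const)
      have happ2 : ContinuousOn (fun θ : ℝ => Wy (A p, θ) (h p)) (Set.uIcc (0:ℝ) 1) :=
        isBoundedBilinearMap_apply.continuous.comp_continuousOn (hWc.prodMk continuousOn_const)
      have happ3 : ContinuousOn (fun θ : ℝ => Dy (A p, θ) (Wy (A p, θ) (h p)))
          (Set.uIcc (0:ℝ) 1) :=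
        isBoundedBilinearMap_apply.continuous.comp_continuousOn (hDc.prodMk happ2)
      have hinner : ContinuousOn
          (fun θ : ℝ => (inner ℝ (Wy (A p, θ) (g p)) (Dy (A p, θ) (Wy (A p, θ) (h p))) : ℝ))
          (Set.uIcc (0:ℝ) 1) :=
        continuous_inner.comp_continuousOn (happ1.prodMk happ3)
      have hdet : ContinuousOn (fun θ : ℝ => dy (A p, θ)) (Set.uIcc (0:ℝ) 1) :=
        (continuous_dy.comp hcm).continuousOn
      have := hinner.mul hdet
      exact this
  -- Fubini
  haveI : IsFiniteMeasure (volume.restrict (Set.Ioc (0:ℝ) 1)) := by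
    constructor
    rw [Measure.restrict_apply_univ]
    simp [Real.volume_Ioc]
  have hprod : Integrable (Function.uncurry fun p θ => G θ p)
      ((volume.restrict Ω).prod (volume.restrict (Set.Ioc (0:ℝ) 1))) := by
    have hmeasprod : AEStronglyMeasurable (Function.uncurry fun p θ => G θ p)
        ((volume.restrict Ω).prod (volume.restrict (Set.Ioc (0:ℝ) 1))) := by
      rw [Measure.prod_restrict]
      have hSm : MeasurableSet (Ω ×ˢ Set.Ioc (0:ℝ) 1) := hΩm.prod measurableSet_Ioc
      have hcm : Continuous fun z : EuclideanSpace ℝ (Fin n) × ℝ => (A z.1, z.2) :=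
        (hAc.comp continuous_fst).prodMk continuous_snd
      have hmaps : ∀ z ∈ Ω ×ˢ Set.Ioc (0:ℝ) 1, (A z.1, z.2) ∈ Oset n := by
        rintro ⟨p, θ⟩ ⟨hp, hθ⟩
        exact hmem p hp θ (Set.Ioc_subset_Icc_self hθ)
      have hWc : ContinuousOn (fun z : EuclideanSpace ℝ (Fin n) × ℝ => Wy (A z.1, z.2))
          (Ω ×ˢ Set.Ioc (0:ℝ) 1) := continuousOn_Wy.comp hcm.continuousOn hmaps
      have hDc : ContinuousOn (fun z : EuclideanSpace ℝ (Fin n) × ℝ => Dy (A z.1, z.2))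
          (Ω ×ˢ Set.Ioc (0:ℝ) 1) := continuousOn_Dy.comp hcm.continuousOn hmaps
      have hWm : AEStronglyMeasurable (fun z : EuclideanSpace ℝ (Fin n) × ℝ => Wy (A z.1, z.2))
          ((volume.prod volume).restrict (Ω ×ˢ Set.Ioc (0:ℝ) 1)) :=
        hWc.aestronglyMeasurable hSm
      have hDm : AEStronglyMeasurable (fun z : EuclideanSpace ℝ (Fin n) × ℝ => Dy (A z.1, z.2))
          ((volume.prod volume).restrict (Ω ×ˢ Set.Ioc (0:ℝ) 1)) :=
        hDc.aestronglyMeasurable hSm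
      have hgm : AEStronglyMeasurable (fun z : EuclideanSpace ℝ (Fin n) × ℝ => g z.1)
          ((volume.prod volume).restrict (Ω ×ˢ Set.Ioc (0:ℝ) 1)) :=
        (hg.comp measurable_fst).aestronglyMeasurable
      have hhm : AEStronglyMeasurable (fun z : EuclideanSpace ℝ (Fin n) × ℝ => h z.1)
          ((volume.prod volume).restrict (Ω ×ˢ Set.Ioc (0:ℝ) 1)) :=
        (hh.comp measurable_fst).aestronglyMeasurable
      have happ1 : AEStronglyMeasurable
          (fun z : EuclideanSpace ℝ (Fin n) × ℝ => Wy (A z.1, z.2) (g z.1))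
          ((volume.prod volume).restrict (Ω ×ˢ Set.Ioc (0:ℝ) 1)) :=
        isBoundedBilinearMap_apply.continuous.comp_aestronglyMeasurable (hWm.prodMk hgm)
      have happ2 : AEStronglyMeasurable
          (fun z : EuclideanSpace ℝ (Fin n) × ℝ => Wy (A z.1, z.2) (h z.1))
          ((volume.prod volume).restrict (Ω ×ˢ Set.Ioc (0:ℝ) 1)) :=
        isBoundedBilinearMap_apply.continuous.comp_aestronglyMeasurable (hWm.prodMk hhm)
      have happ3 : AEStronglyMeasurable
          (fun z : EuclideanSpace ℝ (Fin n) × ℝ => Dy (A z.1, z.2) (Wy (A z.1, z.2) (h z.1)))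
          ((volume.prod volume).restrict (Ω ×ˢ Set.Ioc (0:ℝ) 1)) :=
        isBoundedBilinearMap_apply.continuous.comp_aestronglyMeasurable (hDm.prodMk happ2)
      have hdm : AEStronglyMeasurable
          (fun z : EuclideanSpace ℝ (Fin n) × ℝ => dy (A z.1, z.2))
          ((volume.prod volume).restrict (Ω ×ˢ Set.Ioc (0:ℝ) 1)) :=
        (continuous_dy.comp hcm).aestronglyMeasurable
      have hin : AEStronglyMeasurable
          (fun z : EuclideanSpace ℝ (Fin n) × ℝ =>
            (inner ℝ (Wy (A z.1, z.2) (g z.1)) (Dy (A z.1, z.2) (Wy (A z.1, z.2) (h z.1))) : ℝ))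
          ((volume.prod volume).restrict (Ω ×ˢ Set.Ioc (0:ℝ) 1)) := happ1.inner happ3
      have := hin.mul hdm
      have heq : (Function.uncurry fun p θ => G θ p)
          = fun z : EuclideanSpace ℝ (Fin n) × ℝ =>
              (inner ℝ (Wy (A z.1, z.2) (g z.1)) (Dy (A z.1, z.2) (Wy (A z.1, z.2) (h z.1))) : ℝ)
                * dy (A z.1, z.2) := by
        funext z; exact hGy z.2 z.1
      rw [heq]
      exact this
    have hone : Integrable (fun _ : ℝ => (1:ℝ)) (volume.restrict (Set.Ioc (0:ℝ) 1)) :=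
      integrable_const (1:ℝ)
    have hdom : Integrable
        (fun z : EuclideanSpace ℝ (Fin n) × ℝ => C * (‖g z.1‖ * ‖h z.1‖))
        ((volume.restrict Ω).prod (volume.restrict (Set.Ioc (0:ℝ) 1))) := by
      have := (hint.const_mul C).mul_prod hone
      simpa using this
    refine hdom.mono' hmeasprod ?_
    rw [Measure.prod_restrict, ae_restrict_iff' (hΩm.prod measurableSet_Ioc)]
    refine Filter.Eventually.of_forall ?_
    rintro ⟨p, θ⟩ ⟨hp, hθ⟩
    simpa [Real.norm_eq_abs, Function.uncurry] using
      hbG p hp θ (Set.Ioc_subset_Icc_self hθ)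
  have h00 : (∫ p in Ω, (inner ℝ (g p) (h p) : ℝ)) = ∫ p in Ω, F 0 p :=
    setIntegral_congr_fun hΩm fun p _ => (hF0 p).symm
  rw [h00]
  exact calc (∫ p in Ω, F 1 p) - ∫ p in Ω, F 0 p
      = ∫ p in Ω, (F 1 p - F 0 p) := (integral_sub hIF1 hIF0).symm
    _ = ∫ p in Ω, ∫ θ in (0:ℝ)..1, G θ p := by
        refine setIntegral_congr_fun hΩm fun p hp => ?_
        exact (hFTC p hp).symm
    _ = ∫ p in Ω, ∫ θ in Set.Ioc (0:ℝ) 1, G θ p := by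
        refine setIntegral_congr_fun hΩm fun p _ => ?_
        exact intervalIntegral.integral_of_le zero_le_one
    _ = ∫ θ in Set.Ioc (0:ℝ) 1, ∫ p in Ω, G θ p := integral_integral_swap hprod
    _ = ∫ θ in (0:ℝ)..1, ∫ p in Ω, G θ p :=
        (intervalIntegral.integral_of_le zero_le_one).symm
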